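/- Let K be a field that is p-primary, i.e. K has no nontrivial finite extension of degree prime to p, and let F be a nontrivial finite separable extension of K of degree p^n. Then there is a tower of fields K = F₁ ⊆ F₂ ⊆ ... ⊆ F_n = F with [F_i : F_{i-1}] = p for each i. -/

import Mathlib

set_option maxHeartbeats 1000000
set_option synthInstance.maxHeartbeats 400000


/-- A field `K` is `p`-primary if every finite extension of `K` has degree a power of `p`. -/
def IsPPrimary (p : ℕ) (K : Type) [Field K] : Prop :=
  ∀ (L : Type) [Field L] [Algebra K L], FiniteDimensional K L →
    ∃ k : ℕ, Module.finrank K L = p ^ k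

open Module IntermediateField

/-- In a finite `p`-group situation: a chain of subgroups starting at `H` of `p`-power order,
each of index `p` in the next. -/
private lemma subgroup_chain {G : Type*} [Group G] [Finite G] (p : ℕ) [Fact p.Prime] :
    ∀ (n a : ℕ) (H : Subgroup G), Nat.card H = p ^ a → p ^ (a + n) ∣ Nat.card G →
    ∃ c : Fin (n + 1) → Subgroup G, c 0 = H ∧
      (∀ i : Fin (n + 1), Nat.card (c i) = p ^ (a + (i : ℕ))) ∧
      ∀ i : Fin n, c i.castSucc ≤ c i.succ := by
  intro n
  induction n with
  | zero =>
    intro a H hH _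
    exact ⟨fun _ => H, rfl, fun i => by simpa [Fin.val_eq_zero i] using hH, fun i => i.elim0⟩
  | succ n ih =>
    intro a H hH hdvd
    have hdvd1 : p ^ (a + 1) ∣ Nat.card G :=
      dvd_trans (pow_dvd_pow p (by omega)) hdvd
    obtain ⟨Kk, hKcard, hHK⟩ := Sylow.exists_subgroup_card_pow_succ hdvd1 hH
    obtain ⟨c', hc'0, hc'card, hc'step⟩ := ih (a + 1) Kk hKcard
      (by rwa [show a + 1 + n = a + (n + 1) by omega])
    refine ⟨Fin.cons H c', Fin.cons_zero _ _, ?_, ?_⟩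
    · intro i
      induction i using Fin.cases with
      | zero => simpa using hH
      | succ j =>
        rw [Fin.cons_succ, hc'card j, Fin.val_succ]
        congr 1
        omega
    · intro i
      induction i using Fin.cases with
      | zero =>
        rw [Fin.castSucc_zero, Fin.cons_zero, Fin.cons_succ, hc'0]
        exact hHK
      | succ j =>
        rw [← Fin.succ_castSucc, Fin.cons_succ, Fin.cons_succ]
        exact hc'step j

theorem exists_tower_of_degree_p_steps
    (p : ℕ) (hp : p.Prime) (K F : Type) [Field K] [Field F] [Algebra K F]
    (hK : IsPPrimary p K) [FiniteDimensional K F] [Algebra.IsSeparable K F]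
    (n : ℕ) (hn : 1 ≤ n) (hdeg : Module.finrank K F = p ^ n) :
    ∃ c : Fin (n + 1) → IntermediateField K F,
      c 0 = ⊥ ∧ c (Fin.last n) = ⊤ ∧
      ∀ i : Fin n, c i.castSucc ≤ c i.succ ∧
        IntermediateField.relfinrank (c i.castSucc) (c i.succ) = p := by
  classical
  haveI : Fact p.Prime := ⟨hp⟩
  set Ω := AlgebraicClosure F with hΩ
  haveI : Algebra.IsAlgebraic K F := Algebra.IsAlgebraic.of_finite K F
  haveI : Algebra.IsAlgebraic K Ω := Algebra.IsAlgebraic.trans K F Ω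
  haveI : IsAlgClosure K Ω := ⟨inferInstance, inferInstance⟩
  -- the Galois closure M of F over K inside Ω
  set M := normalClosure K F Ω with hM
  haveI : ∀ f : F →ₐ[K] Ω, Algebra.IsSeparable K f.fieldRange := fun f =>
    AlgEquiv.Algebra.isSeparable (AlgEquiv.ofInjectiveField f)
  haveI : Algebra.IsSeparable K M := by
    rw [hM, normalClosure_def]
    infer_instance
  haveI : IsGalois K M := ⟨⟩
  -- the embedding of F into M
  let j : F →ₐ[K] Ω := IsScalarTower.toAlgHom K F Ω
  have hjle : j.fieldRange ≤ M := j.fieldRange_le_normalClosure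
  let i : F →ₐ[K] ↥M :=
    { toFun := fun x => ⟨j x, hjle ⟨x, rfl⟩⟩
      map_one' := by ext; simp
      map_mul' := fun x y => by ext; simp
      map_zero' := by ext; simp
      map_add' := fun x y => by ext; simp
      commutes' := fun r => by
        ext
        simp only [IntermediateField.algebraMap_apply]
        exact (IsScalarTower.algebraMap_apply K F Ω r).symm }
  have hij : Function.Injective i := fun x y h => by
    have : j x = j y := congrArg Subtype.val h
    exact j.injective this
  set F' : IntermediateField K ↥M := i.fieldRange with hF'
  -- degrees
  obtain ⟨m, hm⟩ := hK ↥M inferInstance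
  have hrange : finrank K ↥F' = p ^ n := by
    rw [← hdeg]
    exact ((AlgEquiv.ofInjectiveField i).symm.toLinearEquiv.finrank_eq)
  set H : Subgroup (↥M ≃ₐ[K] ↥M) := IntermediateField.fixingSubgroup F' with hH
  have hfixH : IntermediateField.fixedField H = F' :=
    IsGalois.fixedField_fixingSubgroup F'
  have hcardG : Nat.card (↥M ≃ₐ[K] ↥M) = p ^ m := by
    rw [IsGalois.card_aut_eq_finrank, hm]
  have hcardH : p ^ n * Nat.card H = p ^ m := by
    have h1 : finrank ↥(IntermediateField.fixedField H) ↥M = Nat.card H := by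
      rw [IntermediateField.finrank_fixedField_eq_card, Nat.card_eq_fintype_card]
    have h2 := Module.finrank_mul_finrank K ↥F' ↥M
    rw [hfixH] at h1
    rw [h1, hrange, hm] at h2
    exact h2
  have hnm : n ≤ m := by
    by_contra h
    have hlt : p ^ m < p ^ n := Nat.pow_lt_pow_right hp.one_lt (by omega)
    have : 1 ≤ Nat.card H := Nat.card_pos
    nlinarith
  have hcardH' : Nat.card H = p ^ (m - n) := by
    have : p ^ n * Nat.card H = p ^ n * p ^ (m - n) := by
      rw [hcardH, ← pow_add]
      congr 1
      omega
    exact Nat.eq_of_mul_eq_mul_left (Nat.pow_pos (n := n) hp.pos) this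
  -- subgroup chain
  obtain ⟨Hs, hHs0, hHscard, hHsstep⟩ := subgroup_chain p n (m - n) H hcardH'
    (by rw [hcardG, show m - n + n = m by omega])
  have hHsmono : Monotone Hs := Fin.monotone_iff_le_succ.mpr hHsstep
  have hHstop : Hs (Fin.last n) = ⊤ := by
    apply Subgroup.eq_top_of_card_eq
    rw [hHscard, hcardG, Fin.val_last, show m - n + n = m by omega]
  -- field chain in M
  have hanti : ∀ {A B : Subgroup (↥M ≃ₐ[K] ↥M)}, A ≤ B →
      IntermediateField.fixedField B ≤ IntermediateField.fixedField A := by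
    intro A B hAB
    rw [IntermediateField.le_iff_le, IntermediateField.fixingSubgroup_fixedField]
    exact hAB
  set E : Fin (n + 1) → IntermediateField K ↥M :=
    fun k => IntermediateField.fixedField (Hs k.rev) with hE
  have hEmono : Monotone E := fun a b hab => hanti (hHsmono (Fin.rev_le_rev.mpr hab))
  have hE0 : E 0 = ⊥ := by
    rw [hE]
    simp only [Fin.rev_zero, hHstop]
    rw [← IntermediateField.fixingSubgroup_bot (F := K) (E := ↥M)]
    exact IsGalois.fixedField_fixingSubgroup ⊥
  have hElast : E (Fin.last n) = F' := by
    rw [hE]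
    simp only [Fin.rev_last, hHs0]
    exact hfixH
  have hEle : ∀ k, E k ≤ F' := fun k => hElast ▸ hEmono (Fin.le_last k)
  have hEcard : ∀ k : Fin (n + 1), finrank ↥(E k) ↥M = p ^ (m - n + (k.rev : ℕ)) := by
    intro k
    rw [hE]
    simp only
    rw [IntermediateField.finrank_fixedField_eq_card, hHscard]
  -- transfer to F
  refine ⟨fun k => (E k).comap i, ?_, ?_, ?_⟩
  · show (E 0).comap i = ⊥
    rw [hE0]
    ext x
    constructor
    · intro hx
      have hx' : i x ∈ (⊥ : IntermediateField K ↥M) := hx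
      rw [IntermediateField.mem_bot] at hx'
      obtain ⟨y, hy⟩ := hx'
      rw [IntermediateField.mem_bot]
      exact ⟨y, hij ((i.commutes y).trans hy)⟩
    · intro hx
      rw [IntermediateField.mem_bot] at hx
      obtain ⟨y, rfl⟩ := hx
      show i (algebraMap K F y) ∈ (⊥ : IntermediateField K ↥M)
      rw [i.commutes, IntermediateField.mem_bot]
      exact ⟨y, rfl⟩
  · show (E (Fin.last n)).comap i = ⊤
    rw [hElast]
    refine eq_top_iff.mpr fun x _ => ?_
    show i x ∈ F'
    exact ⟨x, rfl⟩
  · intro k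
    show (E k.castSucc).comap i ≤ (E k.succ).comap i ∧
      IntermediateField.relfinrank ((E k.castSucc).comap i) ((E k.succ).comap i) = p
    have hle : E k.castSucc ≤ E k.succ := hEmono (Fin.castSucc_lt_succ (i := k)).le
    have hle' : (E k.castSucc).comap i ≤ (E k.succ).comap i := fun x hx => hle hx
    refine ⟨hle', ?_⟩
    rw [IntermediateField.relfinrank_comap_comap_eq_relfinrank_of_le _ _ i (hEle k.succ)]
    have hmul := IntermediateField.relfinrank_mul_finrank_top (E := ↥M) hle
    rw [hEcard k.succ, hEcard k.castSucc] at hmul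
    have hrev1 : (k.castSucc.rev : ℕ) = (k.succ.rev : ℕ) + 1 := by
      simp only [Fin.val_rev, Fin.coe_castSucc, Fin.val_succ]
      omega
    rw [hrev1] at hmul
    have h3 : p ^ (m - n + ((k.succ.rev : ℕ) + 1)) = p * p ^ (m - n + (k.succ.rev : ℕ)) := by
      rw [← pow_succ']
      congr 1
    rw [h3] at hmul
    exact Nat.eq_of_mul_eq_mul_right (Nat.pow_pos hp.pos) hmul
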